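/- arXiv:2509.06789 — 3 statements merged into one kernel-verified Lean document; each statement's English description precedes it below -/
import Mathlib

section
/- In the graph G constructed from a set cover instance (U, 𝒮), the minimum, over all shortest path trees from s spanning the terminal set U, of the number of vertices of the tree that lie in 𝒮 (the nonterminals other than s) equals the minimum cardinality of a subfamily of 𝒮 that covers U. -/
namespace SSPT

variable {V : Type*}

/-- A walk from `x` to `y` in the digraph with edge relation `E`: a nonempty list of
vertices starting at `x`, ending at `y`, whose consecutive pairs are edges. -/
def IsWalk (E : V → V → Prop) (x y : V) (p : List V) : Prop :=
  p ≠ [] ∧ p.head? = some x ∧ p.getLast? = some y ∧ p.Chain' E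

/-- The weight of a walk: the sum of the weights of its (consecutive) edges. -/
def walkWeight (w : V → V → ℝ) (p : List V) : ℝ :=
  ((p.zip p.tail).map fun e => w e.1 e.2).sum

/-- `y` is reachable from `x`. -/
def Reach (E : V → V → Prop) (x y : V) : Prop := ∃ p, IsWalk E x y p

/-- `d` is the shortest-path distance function from `s`: for every vertex `v` reachable
from `s`, `d v` is the minimum weight of a walk from `s` to `v` (attained by some walk). -/
def IsDist (E : V → V → Prop) (w : V → V → ℝ) (s : V) (d : V → ℝ) : Prop :=
  ∀ v, Reach E s v →
    (∃ p, IsWalk E s v p ∧ walkWeight w p = d v) ∧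
    ∀ p, IsWalk E s v p → d v ≤ walkWeight w p

/-- An edge `(u,v)` is tight: `u`, `v` are reachable from `s` and `d u + w u v = d v`. -/
def Tight (E : V → V → Prop) (w : V → V → ℝ) (s : V) (d : V → ℝ) (u v : V) : Prop :=
  E u v ∧ Reach E s u ∧ Reach E s v ∧ d u + w u v = d v

/-- `v` is a vertex of the subgraph `T` (rooted at `s`): it is `s` or an endpoint of an
edge of `T`. -/
def InTree (T : V → V → Prop) (s v : V) : Prop :=
  v = s ∨ (∃ u, T u v) ∨ (∃ u, T v u)

/-- `T` is a tree rooted at `s`: every vertex of `T` is reachable from `s`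
by a unique walk in `T`. -/
def IsTree (T : V → V → Prop) (s : V) : Prop :=
  ∀ v, InTree T s v → ∃! p : List V, IsWalk T s v p

/-- The number of non-terminal vertices of `T` (vertices other than `s` not in `X`). -/
noncomputable def nt (T : V → V → Prop) (s : V) (X : Set V) : ℕ :=
  {v | InTree T s v ∧ v ≠ s ∧ v ∉ X}.ncard

/-- The edge relation of the subgraph of `E` induced by `X`. -/
def edgeOn (E : V → V → Prop) (X : Set V) (a b : V) : Prop :=
  E a b ∧ a ∈ X ∧ b ∈ X

/-- `S` is a source component of the subgraph induced by `X`: a strongly connected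
component of `G[X]` that is not reachable in `G[X]` from any vertex outside it. -/
def IsSourceComponent (E : V → V → Prop) (X : Set V) (S : Set V) : Prop :=
  S.Nonempty ∧ S ⊆ X ∧
  (∀ a ∈ S, ∀ b ∈ S, Reach (edgeOn E X) a b) ∧
  (∀ a ∈ S, ∀ b, Reach (edgeOn E X) a b → Reach (edgeOn E X) b a → b ∈ S) ∧
  (∀ b ∈ X, b ∉ S → ∀ a ∈ S, ¬ Reach (edgeOn E X) b a)

/-- `Pre𝒮`: the non-terminals (other than `s`) having an edge into some source component. -/
def PreS (E : V → V → Prop) (s : V) (X : Set V) : Set V :=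
  {v | v ∉ X ∧ v ≠ s ∧ ∃ t S, IsSourceComponent E X S ∧ t ∈ S ∧ E v t}

/-- `N(v)`: the source components into which `v` has an edge. -/
def Nv (E : V → V → Prop) (X : Set V) (v : V) : Set (Set V) :=
  {S | IsSourceComponent E X S ∧ ∃ t ∈ S, E v t}

/-- `G` is `R`-shallow from `s`: every vertex is reachable from `s` by a walk
with at most `R` edges. -/
def Shallow (E : V → V → Prop) (s : V) (R : ℕ) : Prop :=
  ∀ v, ∃ p, IsWalk E s v p ∧ p.length ≤ R + 1

end SSPT

namespace SSPT

/-- The graph constructed from a set cover instance `(U, 𝒮)`: vertices are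
`s = none`, the sets `some (Sum.inl S)` for `S ∈ 𝒮`, and the elements
`some (Sum.inr x)` for `x : U`; edges go from `s` to each `S ∈ 𝒮` and from each
`S ∈ 𝒮` to each `x ∈ S`. All edges have weight `1`. -/
def scE {U : Type*} (𝒮 : Finset (Finset U)) :
    Option (Finset U ⊕ U) → Option (Finset U ⊕ U) → Prop
  | none, some (Sum.inl S) => S ∈ 𝒮
  | some (Sum.inl S), some (Sum.inr x) => S ∈ 𝒮 ∧ x ∈ S
  | _, _ => False

section Aux
variable {U : Type*} {𝒮 : Finset (Finset U)}

lemma scE_from_none {b} (h : scE 𝒮 none b) : ∃ S, b = some (Sum.inl S) ∧ S ∈ 𝒮 := by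
  match b, h with
  | some (Sum.inl S), h => exact ⟨S, rfl, h⟩
lemma scE_from_inl {S : Finset U} {b} (h : scE 𝒮 (some (Sum.inl S)) b) :
    ∃ x, b = some (Sum.inr x) ∧ S ∈ 𝒮 ∧ x ∈ S := by
  match b, h with
  | some (Sum.inr x), h => exact ⟨x, rfl, h⟩
lemma scE_from_inr {x : U} {b} (h : scE 𝒮 (some (Sum.inr x)) b) : False := by
  match b, h with
  | none, h => exact h
lemma scE_to_inl {S : Finset U} {u} (h : scE 𝒮 u (some (Sum.inl S))) :
    u = none ∧ S ∈ 𝒮 := by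
  match u, h with
  | none, h => exact ⟨rfl, h⟩
lemma scE_to_inr {x : U} {u} (h : scE 𝒮 u (some (Sum.inr x))) :
    ∃ S, u = some (Sum.inl S) ∧ S ∈ 𝒮 ∧ x ∈ S := by
  match u, h with
  | some (Sum.inl S), h => exact ⟨S, rfl, h.1, h.2⟩

lemma ww1 {V : Type*} (w : V → V → ℝ) (a : V) : walkWeight w [a] = 0 := by simp [walkWeight]
lemma ww2 {V : Type*} (w : V → V → ℝ) (a b : V) : walkWeight w [a, b] = w a b := by simp [walkWeight]
lemma ww3 {V : Type*} (w : V → V → ℝ) (a b c : V) : walkWeight w [a, b, c] = w a b + w b c := by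
  simp [walkWeight]

lemma walk_shape {E : Option (Finset U ⊕ U) → Option (Finset U ⊕ U) → Prop}
    (hE : ∀ a b, E a b → scE 𝒮 a b)
    {v : Option (Finset U ⊕ U)} {p : List (Option (Finset U ⊕ U))}
    (h : IsWalk E none v p) :
    (p = [none] ∧ v = none) ∨
    (∃ S, p = [none, some (Sum.inl S)] ∧ v = some (Sum.inl S) ∧
      E none (some (Sum.inl S))) ∨
    (∃ S x, p = [none, some (Sum.inl S), some (Sum.inr x)] ∧ v = some (Sum.inr x) ∧
      E none (some (Sum.inl S)) ∧ E (some (Sum.inl S)) (some (Sum.inr x))) := by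
  obtain ⟨hne, hh, hl, hc⟩ := h
  match p with
  | [] => exact absurd rfl hne
  | a :: l =>
    simp only [List.head?_cons, Option.some.injEq] at hh
    subst hh
    match l with
    | [] =>
      simp only [List.getLast?_singleton, Option.some.injEq] at hl
      exact Or.inl ⟨rfl, hl.symm⟩
    | b :: l2 =>
      simp only [List.Chain', List.isChain_cons_cons] at hc
      obtain ⟨S, rfl, -⟩ := scE_from_none (hE _ _ hc.1)
      match l2 with
      | [] =>
        simp only [List.getLast?_cons_cons, List.getLast?_singleton, Option.some.injEq] at hl
        exact Or.inr (Or.inl ⟨S, rfl, hl.symm, hc.1⟩)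
      | c :: l3 =>
        rw [List.isChain_cons_cons] at hc
        obtain ⟨x, rfl, -⟩ := scE_from_inl (hE _ _ hc.2.1)
        match l3 with
        | [] =>
          simp only [List.getLast?_cons_cons, List.getLast?_singleton, Option.some.injEq] at hl
          exact Or.inr (Or.inr ⟨S, x, rfl, hl.symm, hc.1, hc.2.1⟩)
        | d :: l4 =>
          rw [List.isChain_cons_cons] at hc
          exact absurd (hE _ _ hc.2.2.1) scE_from_inr

end Aux

/-- in the set-cover graph, the minimum, over all shortest path trees from
`s` spanning `U`, of the number of tree vertices lying in `𝒮`, equals the minimum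
cardinality of a subfamily of `𝒮` covering `U`. -/
theorem stmt9 {U : Type*} [DecidableEq U] [Fintype U] [Nonempty U]
    (𝒮 : Finset (Finset U)) (hcov : ∀ x : U, ∃ S ∈ 𝒮, x ∈ S) :
    sInf {n : ℕ | ∃ T : Option (Finset U ⊕ U) → Option (Finset U ⊕ U) → Prop,
        (∀ a b, T a b → scE 𝒮 a b) ∧ IsTree T none ∧
        (∀ x : U, InTree T none (some (Sum.inr x))) ∧
        (∀ v p, InTree T none v → IsWalk T none v p →
          (∀ q, IsWalk (scE 𝒮) none v q →
            walkWeight (fun _ _ => (1 : ℝ)) p ≤ walkWeight (fun _ _ => (1 : ℝ)) q)) ∧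
        n = {S : Finset U | InTree T none (some (Sum.inl S))}.ncard} =
      sInf {n : ℕ | ∃ 𝒞 ⊆ 𝒮, (∀ x : U, ∃ S ∈ 𝒞, x ∈ S) ∧ n = 𝒞.card} := by
  classical
  set A := {n : ℕ | ∃ T : Option (Finset U ⊕ U) → Option (Finset U ⊕ U) → Prop,
        (∀ a b, T a b → scE 𝒮 a b) ∧ IsTree T none ∧
        (∀ x : U, InTree T none (some (Sum.inr x))) ∧
        (∀ v p, InTree T none v → IsWalk T none v p →
          (∀ q, IsWalk (scE 𝒮) none v q →
            walkWeight (fun _ _ => (1 : ℝ)) p ≤ walkWeight (fun _ _ => (1 : ℝ)) q)) ∧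
        n = {S : Finset U | InTree T none (some (Sum.inl S))}.ncard} with hA
  set B := {n : ℕ | ∃ 𝒞 ⊆ 𝒮, (∀ x : U, ∃ S ∈ 𝒞, x ∈ S) ∧ n = 𝒞.card} with hB
  -- Part 1: A ⊆ B
  have hAB : A ⊆ B := by
    rintro n ⟨T, hsub, htree, hspan, hsp, hn⟩
    set K := {S : Finset U | InTree T none (some (Sum.inl S))} with hK
    have hK𝒮 : ∀ S ∈ K, S ∈ 𝒮 := by
      rintro S (h | ⟨u, hu⟩ | ⟨u, hu⟩)
      · exact absurd h (by simp)
      · exact (scE_to_inl (hsub _ _ hu)).2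
      · obtain ⟨x, -, h𝒮, -⟩ := scE_from_inl (hsub _ _ hu)
        exact h𝒮
    refine ⟨𝒮.filter (fun S => InTree T none (some (Sum.inl S))), Finset.filter_subset _ _,
      ?_, ?_⟩
    · intro x
      rcases hspan x with h | ⟨u, hu⟩ | ⟨u, hu⟩
      · exact absurd h (by simp)
      · obtain ⟨S, rfl, hS𝒮, hxS⟩ := scE_to_inr (hsub _ _ hu)
        exact ⟨S, Finset.mem_filter.2 ⟨hS𝒮, Or.inr (Or.inr ⟨_, hu⟩)⟩, hxS⟩
      · exact absurd (hsub _ _ hu) scE_from_inr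
    · rw [hn]
      have : K = ↑(𝒮.filter (fun S => InTree T none (some (Sum.inl S)))) := by
        ext S
        simp only [Finset.coe_filter, Set.mem_setOf_eq]
        exact ⟨fun h => ⟨hK𝒮 S h, h⟩, fun h => h.2⟩
      rw [this, Set.ncard_coe_finset]
  -- Part 2: from any cover, build a tree with at most that many set-vertices
  have hbuild : ∀ 𝒞 ⊆ 𝒮, (∀ x : U, ∃ S ∈ 𝒞, x ∈ S) → ∃ n ∈ A, n ≤ 𝒞.card := by
    intro 𝒞 h𝒞 hc
    choose f hf1 hf2 using hc
    set T : Option (Finset U ⊕ U) → Option (Finset U ⊕ U) → Prop :=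
      fun a b => (a = none ∧ ∃ x, b = some (Sum.inl (f x))) ∨
        (∃ x, a = some (Sum.inl (f x)) ∧ b = some (Sum.inr x)) with hT
    have hsub : ∀ a b, T a b → scE 𝒮 a b := by
      rintro a b (⟨rfl, x, rfl⟩ | ⟨x, rfl, rfl⟩)
      · exact h𝒞 (hf1 x)
      · exact ⟨h𝒞 (hf1 x), hf2 x⟩
    have hchar : ∀ S, InTree T none (some (Sum.inl S)) ↔ ∃ x, f x = S := by
      intro S
      constructor
      · rintro (h | ⟨u, (⟨-, x, hx⟩ | ⟨x, -, hx⟩)⟩ | ⟨u, (⟨h, -⟩ | ⟨x, hx, -⟩)⟩)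
        · exact absurd h (by simp)
        · exact ⟨x, (by simpa using hx.symm)⟩
        · exact absurd hx (by simp)
        · exact absurd h (by simp)
        · exact ⟨x, (by simpa using hx.symm)⟩
      · rintro ⟨x, rfl⟩
        exact Or.inr (Or.inl ⟨none, Or.inl ⟨rfl, x, rfl⟩⟩)
    have hspan : ∀ x : U, InTree T none (some (Sum.inr x)) := fun x =>
      Or.inr (Or.inl ⟨some (Sum.inl (f x)), Or.inr ⟨x, rfl, rfl⟩⟩)
    have htree : IsTree T none := by
      intro v hv
      match v with
      | none =>
        refine ⟨[none], ⟨by simp, rfl, rfl, by simp [List.Chain']⟩, ?_⟩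
        intro p hp
        rcases walk_shape hsub hp with ⟨h1, -⟩ | ⟨S, -, h2, -⟩ | ⟨S, x, -, h2, -, -⟩
        · exact h1
        · exact absurd h2 (by simp)
        · exact absurd h2 (by simp)
      | some (Sum.inl S) =>
        obtain ⟨x, hx⟩ := (hchar S).1 hv
        refine ⟨[none, some (Sum.inl S)],
          ⟨by simp, rfl, rfl, by simp [List.Chain', List.isChain_cons_cons]; exact Or.inl ⟨rfl, x, by rw [hx]⟩⟩, ?_⟩
        intro p hp
        rcases walk_shape hsub hp with ⟨-, h2⟩ | ⟨S', h1, h2, -⟩ | ⟨S', y, -, h2, -, -⟩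
        · exact absurd h2 (by simp)
        · obtain rfl : S = S' := by simpa using h2
          exact h1
        · exact absurd h2 (by simp)
      | some (Sum.inr x) =>
        refine ⟨[none, some (Sum.inl (f x)), some (Sum.inr x)],
          ⟨by simp, rfl, rfl, by
            simp only [List.Chain', List.isChain_cons_cons, List.isChain_singleton, and_true]
            exact ⟨Or.inl ⟨rfl, x, rfl⟩, Or.inr ⟨x, rfl, rfl⟩⟩⟩, ?_⟩
        intro p hp
        rcases walk_shape hsub hp with ⟨-, h2⟩ | ⟨S', -, h2, -⟩ | ⟨S', y, h1, h2, -, he⟩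
        · exact absurd h2 (by simp)
        · exact absurd h2 (by simp)
        · obtain rfl : x = y := by simpa using h2
          rcases he with ⟨h, -⟩ | ⟨z, hz1, hz2⟩
          · exact absurd h (by simp)
          · obtain rfl : x = z := by simpa using hz2
            obtain rfl : S' = f x := by simpa using hz1
            exact h1
    have hsp : ∀ v p, InTree T none v → IsWalk T none v p →
        (∀ q, IsWalk (scE 𝒮) none v q →
          walkWeight (fun _ _ => (1 : ℝ)) p ≤ walkWeight (fun _ _ => (1 : ℝ)) q) := by
      intro v p _ hp q hq
      rcases walk_shape hsub hp with ⟨hp1, hv1⟩ | ⟨S, hp1, hv1, -⟩ | ⟨S, x, hp1, hv1, -, -⟩ <;>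
        rcases walk_shape (fun _ _ h => h) hq with
          ⟨hq1, hv2⟩ | ⟨S', hq1, hv2, -⟩ | ⟨S', x', hq1, hv2, -, -⟩ <;>
        subst hp1 <;> subst hq1 <;> rw [hv1] at hv2 <;> norm_num [walkWeight]
      all_goals simp at hv2
    refine ⟨_, ⟨T, hsub, htree, hspan, hsp, rfl⟩, ?_⟩
    have heq : {S : Finset U | InTree T none (some (Sum.inl S))} = Set.range f := by
      ext S; simpa using hchar S
    rw [heq]
    calc (Set.range f).ncard ≤ (↑𝒞 : Set (Finset U)).ncard :=
          Set.ncard_le_ncard (by rintro S ⟨x, rfl⟩; exact hf1 x) 𝒞.finite_toSet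
      _ = 𝒞.card := Set.ncard_coe_finset _
  -- conclude
  have hBne : B.Nonempty := ⟨𝒮.card, 𝒮, le_refl _, hcov, rfl⟩
  obtain ⟨n, hnA, -⟩ := hbuild 𝒮 (le_refl _) hcov
  have hAne : A.Nonempty := ⟨n, hnA⟩
  apply le_antisymm
  · obtain ⟨𝒞, h𝒞, hc, hcard⟩ := Nat.sInf_mem hBne
    obtain ⟨m, hmA, hm⟩ := hbuild 𝒞 h𝒞 hc
    exact le_trans (Nat.sInf_le hmA) (hcard ▸ hm)
  · exact Nat.sInf_le (hAB (Nat.sInf_mem hAne))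


end SSPT
end

section
/- Let T be a tree rooted at s in G that contains at least one terminal from every source component of G[X]. Then there exists a tree T' rooted at s in G that spans all of X and whose set of non-terminal vertices equals the set of non-terminal vertices of T; in particular nt(T') = nt(T). -/
namespace SSPT

lemma isWalk_singleton (E : V → V → Prop) (x : V) : IsWalk E x x [x] :=
  ⟨by simp, rfl, rfl, List.isChain_singleton x⟩

lemma reach_refl (E : V → V → Prop) (x : V) : Reach E x x := ⟨[x], isWalk_singleton E x⟩

lemma IsWalk.append {E : V → V → Prop} {x y z : V} {p q : List V}
    (hp : IsWalk E x y p) (hq : IsWalk E y z q) : IsWalk E x z (p ++ q.tail) := by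
  obtain ⟨hp0, hp1, hp2, hp3⟩ := hp
  obtain ⟨hq0, hq1, hq2, hq3⟩ := hq
  obtain ⟨b, t, rfl⟩ : ∃ b t, q = b :: t := by
    cases q with
    | nil => exact absurd rfl hq0
    | cons b t => exact ⟨b, t, rfl⟩
  have hb : b = y := by simpa using hq1
  subst hb
  cases t with
  | nil =>
    have hz : b = z := by simpa using hq2
    subst hz
    simpa using ⟨hp0, hp1, hp2, hp3⟩
  | cons c t' =>
    refine ⟨by simp [hp0], ?_, ?_, ?_⟩
    · rw [List.head?_append, hp1]; rfl
    · rw [List.getLast?_append]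
      have : (c :: t').getLast? = some z := by
        rw [← List.getLast?_cons_cons (a := b)]; exact hq2
      rw [List.tail_cons, this]; rfl
    · rw [List.tail_cons]; show List.IsChain _ _; rw [List.isChain_append]
      have h1 : E b c ∧ (c :: t').Chain' E := List.isChain_cons_cons.mp hq3
      refine ⟨hp3, h1.2, ?_⟩
      intro a ha b' hb'
      rw [hp2] at ha
      simp at ha hb'
      subst ha; subst hb'
      exact h1.1

lemma Reach.trans {E : V → V → Prop} {x y z : V} (h1 : Reach E x y) (h2 : Reach E y z) :
    Reach E x z := by
  obtain ⟨p, hp⟩ := h1; obtain ⟨q, hq⟩ := h2; exact ⟨p ++ q.tail, hp.append hq⟩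

lemma cross {F : V → V → Prop} (P : Set V) :
    ∀ (p : List V) {a b : V}, IsWalk F a b p → a ∈ P → b ∉ P →
      ∃ u v, u ∈ P ∧ v ∉ P ∧ F u v := by
  intro p
  induction p with
  | nil => intro a b h _ _; exact absurd rfl h.1
  | cons c rest ih =>
    intro a b h haP hbP
    obtain ⟨hne, hhead, hlast, hchain⟩ := h
    have hca : c = a := by simpa using hhead
    subst hca
    cases rest with
    | nil =>
      have : c = b := by simpa using hlast
      exact absurd (this ▸ haP) hbP
    | cons d r =>
      have hE : F c d ∧ (d :: r).Chain' F := List.isChain_cons_cons.mp hchain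
      by_cases hdP : d ∈ P
      · exact ih ⟨List.cons_ne_nil _ _, rfl, by
          rw [← List.getLast?_cons_cons (a := c)]; exact hlast, hE.2⟩ hdP hbP
      · exact ⟨c, d, haP, hdP, hE.1⟩


lemma start_mem_X {E : V → V → Prop} {X : Set V} {a b : V} {p : List V}
    (h : IsWalk (edgeOn E X) a b p) : a = b ∨ a ∈ X := by
  obtain ⟨hne, hhead, hlast, hchain⟩ := h
  cases p with
  | nil => exact absurd rfl hne
  | cons c rest =>
    have hca : c = a := by simpa using hhead
    subst hca
    cases rest with
    | nil => exact Or.inl (by simpa using hlast)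
    | cons d r =>
      have hE := (List.isChain_cons_cons.mp hchain).1
      exact Or.inr hE.2.1

lemma inTree_mono {T0 T1 : V → V → Prop} (h : ∀ a b, T0 a b → T1 a b) (s v : V)
    (hv : InTree T0 s v) : InTree T1 s v := by
  rcases hv with rfl | ⟨u, hu⟩ | ⟨u, hu⟩
  · exact Or.inl rfl
  · exact Or.inr (Or.inl ⟨u, h _ _ hu⟩)
  · exact Or.inr (Or.inr ⟨u, h _ _ hu⟩)

lemma exists_max [Fintype V] (F : V → V → Prop) :
    ∀ (n : ℕ) (y : V), ({c | Reach F c y ∧ ¬ Reach F y c}).ncard ≤ n →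
      ∃ b, Reach F b y ∧ ∀ a, Reach F a b → Reach F b a := by
  intro n
  induction n with
  | zero =>
    intro y hy
    refine ⟨y, reach_refl F y, fun a ha => ?_⟩
    by_contra hna
    have hm : a ∈ {c | Reach F c y ∧ ¬ Reach F y c} := ⟨ha, hna⟩
    have he : {c | Reach F c y ∧ ¬ Reach F y c} = ∅ :=
      (Set.ncard_eq_zero (Set.toFinite _)).mp (Nat.le_zero.mp hy)
    rw [he] at hm
    exact hm
  | succ n ih =>
    intro y hy
    by_cases hne : {c | Reach F c y ∧ ¬ Reach F y c} = ∅
    · refine ⟨y, reach_refl F y, fun a ha => ?_⟩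
      by_contra hna
      have hm : a ∈ {c | Reach F c y ∧ ¬ Reach F y c} := ⟨ha, hna⟩
      rw [hne] at hm
      exact hm
    · obtain ⟨a, hay, hya⟩ := Set.nonempty_iff_ne_empty.mpr hne
      have hsub : {c | Reach F c a ∧ ¬ Reach F a c} ⊆
          {c | Reach F c y ∧ ¬ Reach F y c} \ {a} := by
        rintro c ⟨hca, hac⟩
        refine ⟨⟨hca.trans hay, fun hyc => hya (hyc.trans hca)⟩, ?_⟩
        intro hc
        rw [Set.mem_singleton_iff] at hc
        subst hc
        exact hac (reach_refl F c)
      have hlt : ({c | Reach F c y ∧ ¬ Reach F y c} \ {a}).ncard <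
          ({c | Reach F c y ∧ ¬ Reach F y c}).ncard :=
        Set.ncard_diff_singleton_lt_of_mem ⟨hay, hya⟩ (Set.toFinite _)
      have hle : ({c | Reach F c a ∧ ¬ Reach F a c}).ncard ≤ n := by
        have := Set.ncard_le_ncard hsub (Set.toFinite _)
        omega
      obtain ⟨b, hb1, hb2⟩ := ih a hle
      exact ⟨b, hb1.trans hay, hb2⟩

lemma exists_source_reach {V : Type*} [Fintype V] (E : V → V → Prop) (X : Set V) {x : V}
    (hx : x ∈ X) :
    ∃ S, IsSourceComponent E X S ∧ ∃ t ∈ S, Reach (edgeOn E X) t x := by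
  set F := edgeOn E X with hF
  obtain ⟨b, hbx, hmax⟩ := exists_max F _ x le_rfl
  have hbX : b ∈ X := by
    rcases start_mem_X hbx.choose_spec with h | h
    · exact h ▸ hx
    · exact h
  refine ⟨{c | Reach F b c ∧ Reach F c b}, ⟨⟨b, reach_refl F b, reach_refl F b⟩, ?_, ?_, ?_, ?_⟩,
    b, ⟨reach_refl F b, reach_refl F b⟩, hbx⟩
  · rintro c ⟨_, hcb⟩
    rcases start_mem_X hcb.choose_spec with h | h
    · exact h ▸ hbX
    · exact h
  · rintro c ⟨_, hcb⟩ d ⟨hbd, _⟩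
    exact hcb.trans hbd
  · rintro c ⟨hbc, hcb⟩ d hcd hdc
    exact ⟨hbc.trans hcd, hdc.trans hcb⟩
  · rintro d _ hdS c ⟨hbc, hcb⟩ hdc
    exact hdS ⟨hmax d (hdc.trans hcb), hdc.trans hcb⟩

lemma inTree_extend {T0 : V → V → Prop} {s u v w : V} (hu : InTree T0 s u)
    (h : InTree (fun a b => T0 a b ∨ (a = u ∧ b = v)) s w) : InTree T0 s w ∨ w = v := by
  rcases h with rfl | ⟨c, hc | ⟨rfl, rfl⟩⟩ | ⟨c, hc | ⟨rfl, rfl⟩⟩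
  · exact Or.inl (Or.inl rfl)
  · exact Or.inl (Or.inr (Or.inl ⟨c, hc⟩))
  · exact Or.inr rfl
  · exact Or.inl (Or.inr (Or.inr ⟨c, hc⟩))
  · exact Or.inl hu

lemma isTree_extend {T0 : V → V → Prop} {s u v : V}
    (htree : IsTree T0 s) (hu : InTree T0 s u) (hv : ¬ InTree T0 s v) :
    IsTree (fun a b => T0 a b ∨ (a = u ∧ b = v)) s := by
  set T1 : V → V → Prop := fun a b => T0 a b ∨ (a = u ∧ b = v) with hT1
  have hvu : v ≠ u := fun h => hv (h ▸ hu)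
  have hvs : v ≠ s := fun h => hv (Or.inl h)
  have hvin : ∀ c, ¬ T0 c v := fun c h => hv (Or.inr (Or.inl ⟨c, h⟩))
  have hvout : ∀ c, ¬ T0 v c := fun c h => hv (Or.inr (Or.inr ⟨c, h⟩))
  have noout : ∀ c, ¬ T1 v c := by
    rintro c (h | ⟨h1, h2⟩)
    · exact hvout c h
    · exact hvu h1
  have into : ∀ c, T1 c v → c = u := by
    rintro c (h | ⟨h1, h2⟩)
    · exact absurd h (hvin c)
    · exact h1
  -- lemma A: any T1-chain containing v ends with v, v occurring once
  have lemA : ∀ p : List V, p.Chain' T1 → v ∈ p → ∃ q, p = q ++ [v] ∧ v ∉ q := by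
    intro p
    induction p with
    | nil => intro _ h; exact absurd h (List.not_mem_nil)
    | cons a rest ih =>
      intro hchain hmem
      by_cases hva : v = a
      · subst hva
        cases rest with
        | nil => exact ⟨[], rfl, List.not_mem_nil⟩
        | cons c r => exact absurd (List.isChain_cons_cons.mp hchain).1 (noout c)
      · have hmr : v ∈ rest := by
          rcases List.mem_cons.mp hmem with h | h
          · exact absurd h hva
          · exact h
        obtain ⟨q', hq1, hq2⟩ := ih hchain.tail hmr
        refine ⟨a :: q', by rw [hq1]; rfl, ?_⟩
        intro hc
        rcases List.mem_cons.mp hc with h | h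
        · exact hva h
        · exact hq2 h
  -- lemma B: any T1-chain avoiding v is a T0-chain
  have lemB : ∀ p : List V, p.Chain' T1 → v ∉ p → p.Chain' T0 := by
    intro p
    induction p with
    | nil => intro _ _; exact List.isChain_nil
    | cons a rest ih =>
      intro hchain hmem
      cases rest with
      | nil => exact List.isChain_singleton a
      | cons c r =>
        have h1 := List.isChain_cons_cons.mp hchain
        have hcv : c ≠ v := by
          intro h; subst h
          exact hmem (List.mem_cons_of_mem _ List.mem_cons_self)
        have hT0 : T0 a c := by
          rcases h1.1 with h | ⟨_, h2⟩
          · exact h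
          · exact absurd h2 hcv
        exact List.isChain_cons_cons.mpr ⟨hT0, ih h1.2 (fun h => hmem (List.mem_cons_of_mem _ h))⟩
  intro w hw
  rcases inTree_extend hu hw with hw0 | hwv
  · -- w is an old vertex; in particular w ≠ v
    have hwv : w ≠ v := fun h => hv (h ▸ hw0)
    obtain ⟨p0, hp0, hp0u⟩ := htree w hw0
    refine ⟨p0, ⟨hp0.1, hp0.2.1, hp0.2.2.1, hp0.2.2.2.imp (fun a b h => Or.inl h)⟩, ?_⟩
    intro p hp
    have hvnp : v ∉ p := by
      intro hvp
      obtain ⟨q, rfl, _⟩ := lemA p hp.2.2.2 hvp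
      have : some v = some w := by rw [← List.getLast?_concat (l := q)]; exact hp.2.2.1
      exact hwv (Option.some.inj this).symm
    exact hp0u p ⟨hp.1, hp.2.1, hp.2.2.1, lemB p hp.2.2.2 hvnp⟩
  · -- w = v
    subst hwv
    obtain ⟨p0, hp0, hp0u⟩ := htree u hu
    have hkey : ∀ p, IsWalk T1 s w p → p = p0 ++ [w] := by
      intro p hp
      have hvp : w ∈ p := by
        have := hp.2.2.1
        exact List.mem_of_getLast? this
      obtain ⟨q, rfl, hvq⟩ := lemA p hp.2.2.2 hvp
      obtain ⟨c0, q', rfl⟩ : ∃ c0 q', q = c0 :: q' := by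
        cases q with
        | nil =>
          exfalso
          have : some w = some s := by simpa using hp.2.1
          exact hvs (Option.some.inj this)
        | cons c0 q' => exact ⟨c0, q', rfl⟩
      have hch := List.isChain_append.mp hp.2.2.2
      have hlastq : ((c0 :: q').getLast?) = some ((c0 :: q').getLast (List.cons_ne_nil _ _)) :=
        List.getLast?_eq_getLast _
      have hTl : T1 ((c0 :: q').getLast (List.cons_ne_nil _ _)) w := by
        exact hch.2.2 _ (by rw [hlastq]; rfl) w rfl
      have hlu : (c0 :: q').getLast (List.cons_ne_nil _ _) = u := into _ hTl
      have hwalkq : IsWalk T0 s u (c0 :: q') := by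
        refine ⟨List.cons_ne_nil _ _, ?_, ?_, lemB _ hch.1 hvq⟩
        · have := hp.2.1
          rw [List.cons_append] at this
          simpa using this
        · rw [hlastq, hlu]
      rw [hp0u _ hwalkq]
    refine ⟨p0 ++ [w], ?_, hkey⟩
    refine ⟨by simp, ?_, ?_, ?_⟩
    · rw [List.head?_append, hp0.2.1]; rfl
    · exact List.getLast?_concat (l := p0)
    · show List.IsChain _ _; rw [List.isChain_append]
      refine ⟨hp0.2.2.2.imp (fun a b h => Or.inl h), List.isChain_singleton w, ?_⟩
      intro a ha b hb
      rw [hp0.2.2.1] at ha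
      simp at ha hb
      subst ha; subst hb
      exact Or.inr ⟨rfl, rfl⟩

lemma grow {V : Type*} [Fintype V] (E : V → V → Prop) (s : V) (X : Set V)
    (T : V → V → Prop)
    (hreach : ∀ x ∈ X, ∃ t, InTree T s t ∧ Reach (edgeOn E X) t x) :
    ∀ (n : ℕ) (T0 : V → V → Prop),
      (X \ {v | InTree T0 s v}).ncard ≤ n →
      (∀ a b, T0 a b → E a b) → IsTree T0 s →
      (∀ w, InTree T s w → InTree T0 s w) →
      (∀ w, InTree T0 s w → InTree T s w ∨ w ∈ X) →
      ∃ T' : V → V → Prop, (∀ a b, T' a b → E a b) ∧ IsTree T' s ∧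
        (∀ t ∈ X, InTree T' s t) ∧
        (∀ w, InTree T s w → InTree T' s w) ∧
        (∀ w, InTree T' s w → InTree T s w ∨ w ∈ X) := by
  intro n
  induction n with
  | zero =>
    intro T0 hcard hSub hTree hMono hVert
    refine ⟨T0, hSub, hTree, fun t ht => ?_, hMono, hVert⟩
    by_contra h
    have hm : t ∈ X \ {v | InTree T0 s v} := ⟨ht, h⟩
    have he : X \ {v | InTree T0 s v} = ∅ :=
      (Set.ncard_eq_zero (Set.toFinite _)).mp (Nat.le_zero.mp hcard)
    rw [he] at hm
    exact hm
  | succ n ih =>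
    intro T0 hcard hSub hTree hMono hVert
    by_cases hX : ∀ t ∈ X, InTree T0 s t
    · exact ⟨T0, hSub, hTree, hX, hMono, hVert⟩
    · push_neg at hX
      obtain ⟨x, hxX, hxT⟩ := hX
      obtain ⟨t, htT, htx⟩ := hreach x hxX
      obtain ⟨p, hp⟩ := htx
      obtain ⟨u, w, huP, hwP, huw⟩ := cross {z | InTree T0 s z} p hp (hMono t htT) hxT
      have hwX : w ∈ X := huw.2.2
      set T1 : V → V → Prop := fun a b => T0 a b ∨ (a = u ∧ b = w) with hT1
      have hT01 : ∀ a b, T0 a b → T1 a b := fun a b h => Or.inl h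
      have hwT1 : InTree T1 s w := Or.inr (Or.inl ⟨u, Or.inr ⟨rfl, rfl⟩⟩)
      have hcard1 : (X \ {v | InTree T1 s v}).ncard ≤ n := by
        have hsub : X \ {v | InTree T1 s v} ⊆ (X \ {v | InTree T0 s v}) \ {w} := by
          rintro z ⟨hz1, hz2⟩
          refine ⟨⟨hz1, fun hz => hz2 (inTree_mono hT01 s z hz)⟩, ?_⟩
          intro hzw
          rw [Set.mem_singleton_iff] at hzw
          subst hzw
          exact hz2 hwT1
        have hlt : ((X \ {v | InTree T0 s v}) \ {w}).ncard < (X \ {v | InTree T0 s v}).ncard :=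
          Set.ncard_diff_singleton_lt_of_mem ⟨hwX, hwP⟩ (Set.toFinite _)
        have := Set.ncard_le_ncard hsub (Set.toFinite _)
        omega
      refine ih T1 hcard1 ?_ (isTree_extend hTree huP hwP) ?_ ?_
      · rintro a b (h | ⟨rfl, rfl⟩)
        · exact hSub a b h
        · exact huw.1
      · intro z hz
        exact inTree_mono hT01 s z (hMono z hz)
      · intro z hz
        rcases inTree_extend huP hz with h | rfl
        · exact hVert z h
        · exact Or.inr hwX

/-- if a tree `T` rooted at `s` contains at least one terminal from every
source component of `G[X]`, then there is a tree `T'` rooted at `s` spanning all of `X`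
whose set of non-terminal vertices equals that of `T`; in particular `nt T' = nt T`. -/
theorem stmt10 {V : Type*} [Fintype V] (E : V → V → Prop) (s : V) (X : Set V)
    (hsX : s ∉ X)
    (T : V → V → Prop) (hsub : ∀ a b, T a b → E a b) (htree : IsTree T s)
    (hhit : ∀ S, IsSourceComponent E X S → ∃ t ∈ S, InTree T s t) :
    ∃ T' : V → V → Prop, (∀ a b, T' a b → E a b) ∧ IsTree T' s ∧
      (∀ t ∈ X, InTree T' s t) ∧
      {v | InTree T' s v ∧ v ≠ s ∧ v ∉ X} = {v | InTree T s v ∧ v ≠ s ∧ v ∉ X} ∧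
      nt T' s X = nt T s X := by
  have hreach : ∀ x ∈ X, ∃ t, InTree T s t ∧ Reach (edgeOn E X) t x := by
    intro x hx
    obtain ⟨S, hS, t0, ht0, ht0x⟩ := exists_source_reach E X hx
    obtain ⟨t, htS, htT⟩ := hhit S hS
    exact ⟨t, htT, (hS.2.2.1 t htS t0 ht0).trans ht0x⟩
  obtain ⟨T', hsub', htree', hspan', hmono', hvert'⟩ :=
    grow E s X T hreach (X \ {v | InTree T s v}).ncard T le_rfl hsub htree
      (fun w h => h) (fun w h => Or.inl h)
  have hset : {v | InTree T' s v ∧ v ≠ s ∧ v ∉ X} = {v | InTree T s v ∧ v ≠ s ∧ v ∉ X} := by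
    ext v
    constructor
    · rintro ⟨h1, h2, h3⟩
      rcases hvert' v h1 with h | h
      · exact ⟨h, h2, h3⟩
      · exact absurd h h3
    · rintro ⟨h1, h2, h3⟩
      exact ⟨hmono' v h1, h2, h3⟩
  exact ⟨T', hsub', htree', hspan', hset, by rw [nt, nt, hset]⟩


end SSPT
end

section
/- Let T be a tree rooted at s in G that spans X, and let S be a source component of G[X]. Then T contains an edge (v,t) such that v ∉ X (v is a non-terminal or v = s, and if S contains no terminal reachable directly from s then v is a non-terminal) and t ∈ S; more precisely, if t is a terminal of S at minimum tree-distance from s in T, then the parent v of t in T satisfies v ∉ X. -/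
namespace SSPT


private lemma walk_concat {V : Type*} {T : V → V → Prop} {s v t : V} {q : List V}
    (hq : IsWalk T s v q) (h : T v t) : IsWalk T s t (q ++ [t]) := by
  obtain ⟨hne, hhd, hlast, hch⟩ := hq
  refine ⟨by simp, ?_, ?_, ?_⟩
  · rwa [List.head?_append_of_ne_nil _ hne]
  · simp [List.getLast?_concat]
  · rw [List.Chain', List.isChain_append]
    refine ⟨hch, List.isChain_singleton _, ?_⟩
    intro x hx y hy
    simp at hy
    rw [hlast] at hx
    simp at hx
    subst hx; subst hy; exact h

private lemma walk_split {V : Type*} {T : V → V → Prop} {s t : V} {p : List V}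
    (hp : IsWalk T s t p) (hts : t ≠ s) :
    ∃ q v, p = q ++ [t] ∧ IsWalk T s v q ∧ T v t := by
  obtain ⟨hne, hhd, hlast, hch⟩ := hp
  have hlast' : p.getLast hne = t := by
    rw [List.getLast?_eq_getLast hne] at hlast; exact Option.some_injective _ hlast
  have hps : p = p.dropLast ++ [t] := by
    conv_lhs => rw [← List.dropLast_append_getLast hne]
    rw [hlast']
  set q := p.dropLast with hq
  have hqne : q ≠ [] := by
    intro h
    rw [h, List.nil_append] at hps
    rw [hps] at hhd
    simp at hhd
    exact hts hhd
  refine ⟨q, q.getLast hqne, hps, ⟨hqne, ?_, ?_, ?_⟩, ?_⟩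
  · rw [hps, List.head?_append_of_ne_nil _ hqne] at hhd; exact hhd
  · rw [List.getLast?_eq_getLast hqne]
  · rw [hps, List.Chain', List.isChain_append] at hch; exact hch.1
  · rw [hps, List.Chain', List.isChain_append] at hch
    exact hch.2.2 _ (by rw [List.getLast?_eq_getLast hqne]; rfl) t rfl

/-- if `T` is a tree rooted at `s` spanning `X` and `S` is a source
component of `G[X]`, then `T` contains an edge `(v,t)` with `v ∉ X` and `t ∈ S`;
more precisely, for any terminal `t ∈ S` at minimum tree-distance from `s` in `T`
among the terminals of `S`, the parent `v` of `t` in `T` satisfies `v ∉ X`. -/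
theorem stmt11 {V : Type*} [Fintype V] (E : V → V → Prop) (s : V) (X : Set V)
    (hsX : s ∉ X)
    (T : V → V → Prop) (hsub : ∀ a b, T a b → E a b) (htree : IsTree T s)
    (hspan : ∀ t ∈ X, InTree T s t)
    (S : Set V) (hS : IsSourceComponent E X S) :
    (∃ v t, T v t ∧ t ∈ S ∧ v ∉ X) ∧
      ∀ t ∈ S, ∀ p, IsWalk T s t p →
        (∀ t' ∈ S, ∀ p', IsWalk T s t' p' → p.length ≤ p'.length) →
        ∀ v, T v t → v ∉ X := by
  classical
  obtain ⟨hSne, hSX, hconn, hmax, hsrc⟩ := hS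
  have key : ∀ t ∈ S, ∀ p, IsWalk T s t p →
        (∀ t' ∈ S, ∀ p', IsWalk T s t' p' → p.length ≤ p'.length) →
        ∀ v, T v t → v ∉ X := by
    intro t ht p hp hmin v hvt hvX
    have hvIn : InTree T s v := Or.inr (Or.inr ⟨t, hvt⟩)
    obtain ⟨q, hq, huq⟩ := htree v hvIn
    have hpq : p = q ++ [t] := by
      obtain ⟨r, hr, hur⟩ := htree t (hspan t (hSX ht))
      rw [hur p hp, hur _ (walk_concat hq hvt)]
    by_cases hvS : v ∈ S
    · have := hmin v hvS q hq
      rw [hpq] at this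
      simp at this
    · refine hsrc v hvX hvS t ht ⟨[v, t], ?_, rfl, rfl, ?_⟩
      · simp
      · simp only [List.Chain', List.isChain_cons_cons, List.isChain_singleton, and_true]
        exact ⟨hsub v t hvt, hvX, hSX ht⟩
  refine ⟨?_, key⟩
  set f : V → ℕ := fun t => if h : ∃ p, IsWalk T s t p then h.choose.length else 0 with hf
  have hfeq : ∀ t' ∈ S, ∀ p, IsWalk T s t' p → f t' = p.length := by
    intro t' ht' p hp
    have h : ∃ p, IsWalk T s t' p := ⟨p, hp⟩
    obtain ⟨r, hr, hur⟩ := htree t' (hspan t' (hSX ht'))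
    simp only [hf, dif_pos h]
    rw [hur _ h.choose_spec, hur p hp]
  obtain ⟨t, htS, hmin⟩ := Set.exists_min_image S f (Set.toFinite S) hSne
  obtain ⟨p, hp, -⟩ := htree t (hspan t (hSX htS))
  have hmin' : ∀ t' ∈ S, ∀ p', IsWalk T s t' p' → p.length ≤ p'.length := by
    intro t' ht' p' hp'
    have := hmin t' ht'
    rwa [hfeq t htS p hp, hfeq t' ht' p' hp'] at this
  have hts : t ≠ s := fun h => hsX (h ▸ hSX htS)
  obtain ⟨q, v, -, -, hvt⟩ := walk_split hp hts
  exact ⟨v, t, hvt, htS, key t htS p hp hmin' v hvt⟩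

end SSPT
end
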